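/- If the associated graded algebra gr(A) is a Noetherian ring, then A is a Noetherian ring. -/

import Mathlib

namespace GrProof

variable {S : Type*} [AddCommMonoid S] [PartialOrder S]

section OrderExt

lemma add_lt_add'' (hmono : ∀ r r' s s' : S, r ≤ r' → s ≤ s' → r + s ≤ r' + s')
    (hstrict : ∀ r s t : S, r < s → r + t < s + t)
    {a b c d : S} (h1 : a < b) (h2 : c ≤ d) : a + c < b + d := by
  calc a + c < b + c := hstrict _ _ _ h1
    _ ≤ b + d := hmono _ _ _ _ le_rfl h2

lemma no_shrink (hstrict : ∀ r s t : S, r < s → r + t < s + t)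
    (hwf : WellFounded ((· < ·) : S → S → Prop)) :
    ∀ y μ : S, ¬ (y + μ < y) := by
  intro y
  induction y using WellFounded.induction hwf with
  | _ y IH =>
    intro μ h
    exact IH (y + μ) h μ (hstrict _ _ μ h)

lemma nsmul_le_nsmul'' (hmono : ∀ r r' s s' : S, r ≤ r' → s ≤ s' → r + s ≤ r' + s')
    {a b : S} (h : a ≤ b) (n : ℕ) : n • a ≤ n • b := by
  induction n with
  | zero => simp
  | succ n IH =>
    rw [succ_nsmul, succ_nsmul]
    exact hmono _ _ _ _ IH h

lemma nsmul_lt_nsmul'' (hmono : ∀ r r' s s' : S, r ≤ r' → s ≤ s' → r + s ≤ r' + s')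
    (hstrict : ∀ r s t : S, r < s → r + t < s + t)
    {a b : S} (h : a < b) (n : ℕ) (hn : n ≠ 0) : n • a < n • b := by
  obtain ⟨m, rfl⟩ := Nat.exists_eq_succ_of_ne_zero hn
  rw [succ_nsmul, succ_nsmul]
  calc m • a + a ≤ m • b + a := hmono _ _ _ _ (nsmul_le_nsmul'' hmono h.le m) le_rfl
    _ < m • b + b := by
        have := hstrict _ _ (m • b) h
        simpa [add_comm] using this

/-- The "difference" setoid on `S × S`: `(a,b) ~ (c,d)` iff `b - a = d - c` in the
Grothendieck sense. -/
def gsd : Setoid (S × S) where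
  r p q := ∃ w : S, w + p.2 + q.1 = w + q.2 + p.1
  iseqv := by
    constructor
    · intro p; exact ⟨0, rfl⟩
    · rintro p q ⟨w, hw⟩
      exact ⟨w, hw.symm⟩
    · rintro p q r ⟨w1, h1⟩ ⟨w2, h2⟩
      refine ⟨w1 + w2 + q.2 + q.1, ?_⟩
      have H := congrArg (· + (w2 + q.2 + r.1)) h1
      -- h1 : w1 + p.2 + q.1 = w1 + q.2 + p.1
      -- h2 : w2 + q.2 + r.1 = w2 + r.2 + q.1
      calc w1 + w2 + q.2 + q.1 + p.2 + r.1
          = (w1 + p.2 + q.1) + (w2 + q.2 + r.1) := by abel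
        _ = (w1 + q.2 + p.1) + (w2 + r.2 + q.1) := by rw [h1, h2]
        _ = w1 + w2 + q.2 + q.1 + r.2 + p.1 := by abel

/-- Grothendieck-style difference "group" of `S` (only the operations we need). -/
def GD (S : Type*) [AddCommMonoid S] [PartialOrder S] := Quotient (gsd (S := S))

/-- `dd s t` represents the difference `t - s`. -/
def dd (s t : S) : GD S := Quotient.mk (gsd) (s, t)

lemma dd_eq_iff {a b c d : S} : dd a b = dd c d ↔ ∃ w : S, w + b + c = w + d + a := by
  constructor
  · intro h; exact Quotient.exact h
  · intro h; exact Quotient.sound h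

def gplus : GD S → GD S → GD S :=
  Quotient.map₂ (fun p q => (p.1 + q.1, p.2 + q.2)) (by
    rintro p p' ⟨w1, h1⟩ q q' ⟨w2, h2⟩
    refine ⟨w1 + w2, ?_⟩
    calc w1 + w2 + (p.2 + q.2) + (p'.1 + q'.1)
        = (w1 + p.2 + p'.1) + (w2 + q.2 + q'.1) := by abel
      _ = (w1 + p'.2 + p.1) + (w2 + q'.2 + q.1) := by rw [h1, h2]
      _ = w1 + w2 + (p'.2 + q'.2) + (p.1 + q.1) := by abel)

def gneg : GD S → GD S :=
  Quotient.map (fun p => (p.2, p.1)) (by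
    rintro p q ⟨w, h⟩
    exact ⟨w, by
      calc w + p.1 + q.2 = w + q.2 + p.1 := by abel
        _ = w + p.2 + q.1 := h.symm
        _ = w + q.1 + p.2 := by abel⟩)

@[simp] lemma gplus_dd (a b c d : S) : gplus (dd a b) (dd c d) = dd (a + c) (b + d) := rfl

@[simp] lemma gneg_dd (a b : S) : gneg (dd a b) = dd b a := rfl

lemma gd_exists_rep (g : GD S) : ∃ a b : S, g = dd a b := by
  obtain ⟨⟨a, b⟩, rfl⟩ := Quotient.exists_rep g
  exact ⟨a, b, rfl⟩

lemma dd_trans_shift (r s t : S) : dd (r + s) (r + t) = dd s t :=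
  dd_eq_iff.2 ⟨0, by abel⟩

lemma dd_refl_zero (s : S) : dd s s = dd 0 0 :=
  dd_eq_iff.2 ⟨0, by abel⟩

lemma gplus_comm (g h : GD S) : gplus g h = gplus h g := by
  obtain ⟨a, b, rfl⟩ := gd_exists_rep g
  obtain ⟨c, d, rfl⟩ := gd_exists_rep h
  simp [add_comm]

lemma dd_chain (a b c : S) : gplus (dd a b) (dd b c) = dd a c := by
  rw [gplus_dd]
  exact dd_eq_iff.2 ⟨0, by abel⟩

def gnsmul : ℕ → GD S → GD S
  | 0, _ => dd 0 0
  | n + 1, g => gplus g (gnsmul n g)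

lemma gnsmul_dd (n : ℕ) (a b : S) : gnsmul n (dd a b) = dd (n • a) (n • b) := by
  induction n with
  | zero => simp [gnsmul, zero_nsmul]
  | succ n IH =>
    rw [gnsmul, IH, gplus_dd, succ_nsmul, succ_nsmul]
    exact dd_eq_iff.2 ⟨0, by abel⟩

lemma dd_add_cancel (x y c : S) : dd (x + c) (y + c) = dd x y :=
  dd_eq_iff.2 ⟨0, by abel⟩

/-- base + add-closed + safe -/
def IsSafeCone (Sig : Set S) (P : Set (GD S)) : Prop :=
  (∀ s t : S, s ≤ t → dd s t ∈ P) ∧ (∀ ρ ∈ Sig, dd 0 ρ ∈ P) ∧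
  (∀ g h : GD S, g ∈ P → h ∈ P → gplus g h ∈ P) ∧ (∀ s t : S, s < t → dd t s ∉ P)

inductive genBy (T : Set (GD S)) : GD S → Prop
  | mem {g} : g ∈ T → genBy T g
  | add {g h} : genBy T g → genBy T h → genBy T (gplus g h)

def baseSet (Sig : Set S) : Set (GD S) :=
  {g | ∃ s t : S, s ≤ t ∧ g = dd s t} ∪ {g | ∃ ρ ∈ Sig, g = dd 0 ρ}

lemma genBy_struct {Sig : Set S}
    (hmono : ∀ r r' s s' : S, r ≤ r' → s ≤ s' → r + s ≤ r' + s')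
    {g : GD S} (hg : genBy (baseSet Sig) g) :
    ∃ a b μ : S, g = dd a (b + μ) ∧ a ≤ b := by
  induction hg with
  | mem h =>
    rcases h with ⟨s, t, hst, rfl⟩ | ⟨ρ, _, rfl⟩
    · exact ⟨s, t, 0, by rw [add_zero], hst⟩
    · exact ⟨0, 0, ρ, by rw [zero_add], le_rfl⟩
  | add _ _ IH1 IH2 =>
    obtain ⟨a, b, μ, rfl, hab⟩ := IH1
    obtain ⟨a', b', μ', rfl, hab'⟩ := IH2
    refine ⟨a + a', b + b', μ + μ', ?_, hmono _ _ _ _ hab hab'⟩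
    rw [gplus_dd]
    exact congrArg (dd (a + a')) (by abel)

lemma ground_cone (Sig : Set S)
    (hmono : ∀ r r' s s' : S, r ≤ r' → s ≤ s' → r + s ≤ r' + s')
    (hstrict : ∀ r s t : S, r < s → r + t < s + t)
    (hwf : WellFounded ((· < ·) : S → S → Prop)) :
    IsSafeCone Sig {g | genBy (baseSet Sig) g} := by
  refine ⟨fun s t h => genBy.mem (Or.inl ⟨s, t, h, rfl⟩),
    fun ρ hρ => genBy.mem (Or.inr ⟨ρ, hρ, rfl⟩),
    fun g h hg hh => genBy.add hg hh, ?_⟩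
  intro s t hst hmem
  obtain ⟨a, b, μ, hEq, hab⟩ := genBy_struct hmono hmem
  rw [dd_eq_iff] at hEq
  obtain ⟨w, hw⟩ := hEq
  -- hw : w + s + a = w + (b + μ) + t
  have key2 : (w + t + b) + μ < w + t + b := by
    have h1 : (w + t + b) + μ = w + s + a := by rw [hw]; abel
    have h2 : w + s + a ≤ w + s + b := hmono _ _ _ _ le_rfl hab
    have h3 : w + s + b < w + t + b := by
      calc w + s + b = s + (w + b) := by abel
        _ < t + (w + b) := hstrict s t (w + b) hst
        _ = w + t + b := by abel
    rw [h1]; exact lt_of_le_of_lt h2 h3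
  exact no_shrink hstrict hwf _ _ key2

lemma cone_zero_mem {Sig : Set S} {P : Set (GD S)} (hP : IsSafeCone Sig P) :
    dd (0:S) 0 ∈ P := hP.1 0 0 le_rfl

lemma gplus_zero (g : GD S) : gplus g (dd 0 0) = g := by
  obtain ⟨a, b, rfl⟩ := gd_exists_rep g
  rw [gplus_dd, add_zero, add_zero]

lemma cone_nsmul {Sig : Set S} {P : Set (GD S)} (hP : IsSafeCone Sig P)
    {g : GD S} (hg : g ∈ P) (n : ℕ) : gnsmul n g ∈ P := by
  induction n with
  | zero => exact cone_zero_mem hP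
  | succ n IH => exact hP.2.2.1 _ _ hg IH

lemma exists_max_cone (Sig : Set S)
    (hmono : ∀ r r' s s' : S, r ≤ r' → s ≤ s' → r + s ≤ r' + s')
    (hstrict : ∀ r s t : S, r < s → r + t < s + t)
    (hwf : WellFounded ((· < ·) : S → S → Prop)) :
    ∃ P : Set (GD S), IsSafeCone Sig P ∧ ∀ Q : Set (GD S), IsSafeCone Sig Q → P ⊆ Q → Q = P := by
  obtain ⟨P, -, hPS, hmax0⟩ := zorn_subset_nonempty {P : Set (GD S) | IsSafeCone Sig P}
    (fun c hc hchain hne => by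
      refine ⟨⋃₀ c, ⟨?_, ?_, ?_, ?_⟩, fun s hs => Set.subset_sUnion_of_mem hs⟩
      · intro s t h
        obtain ⟨P₁, hP₁⟩ := hne
        exact ⟨P₁, hP₁, (hc hP₁).1 s t h⟩
      · intro ρ hρ
        obtain ⟨P₁, hP₁⟩ := hne
        exact ⟨P₁, hP₁, (hc hP₁).2.1 ρ hρ⟩
      · rintro g h ⟨P₁, hP₁, hg⟩ ⟨P₂, hP₂, hh⟩
        rcases hchain.total hP₁ hP₂ with hsub | hsub
        · exact ⟨P₂, hP₂, (hc hP₂).2.2.1 g h (hsub hg) hh⟩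
        · exact ⟨P₁, hP₁, (hc hP₁).2.2.1 g h hg (hsub hh)⟩
      · rintro s t hst ⟨P₁, hP₁, hmem⟩
        exact (hc hP₁).2.2.2 s t hst hmem)
    {g | genBy (baseSet Sig) g} (ground_cone Sig hmono hstrict hwf)
  exact ⟨P, hPS, fun Q hQ hPQ => Set.Subset.antisymm (hmax0 hQ hPQ) hPQ⟩

theorem exists_totalpre
    (hmono : ∀ r r' s s' : S, r ≤ r' → s ≤ s' → r + s ≤ r' + s')
    (hstrict : ∀ r s t : S, r < s → r + t < s + t)
    (hwf : WellFounded ((· < ·) : S → S → Prop))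
    (Sig : Set S) :
    ∃ R : S → S → Prop,
      (∀ s t : S, s ≤ t → R s t) ∧
      (∀ s t : S, s < t → ¬ R t s) ∧
      (∀ s t : S, R s t ∨ R t s) ∧
      (∀ r s t : S, R s t ↔ R (r + s) (r + t)) ∧
      (∀ s t u : S, R s t → R t u → R s u) ∧
      (∀ ρ s : S, ρ ∈ Sig → R s (ρ + s)) := by
  obtain ⟨P, hP, hmax⟩ := exists_max_cone Sig hmono hstrict hwf
  refine ⟨fun s t => dd s t ∈ P, fun s t h => hP.1 s t h, fun s t h => hP.2.2.2 s t h, ?_, ?_, ?_, ?_⟩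
  · -- totality
    intro s t
    by_contra hcon
    push_neg at hcon
    obtain ⟨hst, hts⟩ := hcon
    -- two unsafe extensions
    have ext : ∀ u v : S, dd u v ∉ P →
        ∃ (s₁ t₁ a₁ b₁ : S) (n₁ : ℕ), s₁ < t₁ ∧ n₁ ≠ 0 ∧ dd a₁ b₁ ∈ P ∧
          dd t₁ s₁ = dd (a₁ + n₁ • u) (b₁ + n₁ • v) := by
      intro u v huv
      set Q : Set (GD S) := {h | ∃ p ∈ P, ∃ n : ℕ, h = gplus p (gnsmul n (dd u v))} with hQdef
      have hPQ : P ⊆ Q := fun p hp => ⟨p, hp, 0, by rw [gnsmul, gplus_zero]⟩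
      have hQP : Q ≠ P := by
        intro hEq
        apply huv
        rw [← hEq]
        refine ⟨dd 0 0, cone_zero_mem hP, 1, ?_⟩
        rw [gnsmul, gnsmul, gplus_zero, gplus_comm, gplus_zero]
      have hQnotCone : ¬ IsSafeCone Sig Q := by
        intro hQ
        exact hQP (hmax Q hQ hPQ)
      -- Q has base and add closure
      have hbase1 : ∀ s' t' : S, s' ≤ t' → dd s' t' ∈ Q :=
        fun s' t' h => hPQ (hP.1 s' t' h)
      have hbase2 : ∀ ρ ∈ Sig, dd 0 ρ ∈ Q := fun ρ h => hPQ (hP.2.1 ρ h)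
      have hadd : ∀ g h : GD S, g ∈ Q → h ∈ Q → gplus g h ∈ Q := by
        rintro g h ⟨p, hp, n, rfl⟩ ⟨p', hp', n', rfl⟩
        refine ⟨gplus p p', hP.2.2.1 _ _ hp hp', n + n', ?_⟩
        obtain ⟨pa, pb, rfl⟩ := gd_exists_rep p
        obtain ⟨pa', pb', rfl⟩ := gd_exists_rep p'
        rw [gnsmul_dd, gnsmul_dd, gnsmul_dd, gplus_dd, gplus_dd, gplus_dd, gplus_dd, add_nsmul, add_nsmul]
        exact congrArg₂ dd (by dsimp only; ac_rfl) (by dsimp only; ac_rfl)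
      -- so safety fails
      have : ∃ s₁ t₁ : S, s₁ < t₁ ∧ dd t₁ s₁ ∈ Q := by
        by_contra hno
        push_neg at hno
        exact hQnotCone ⟨hbase1, hbase2, hadd, fun s₁ t₁ h₁ h₂ => (hno s₁ t₁ h₁) h₂⟩
      obtain ⟨s₁, t₁, hlt, p, hp, n, hEq⟩ := this
      obtain ⟨a₁, b₁, rfl⟩ := gd_exists_rep p
      have hn : n ≠ 0 := by
        rintro rfl
        rw [gnsmul, gplus_zero] at hEq
        exact hP.2.2.2 s₁ t₁ hlt (hEq ▸ hp)
      refine ⟨s₁, t₁, a₁, b₁, n, hlt, hn, hp, ?_⟩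
      rw [hEq, gnsmul_dd, gplus_dd]
    obtain ⟨s₁, t₁, a₁, b₁, n₁, hlt₁, hn₁, hp₁, hE₁⟩ := ext s t hst
    obtain ⟨s₂, t₂, a₂, b₂, n₂, hlt₂, hn₂, hp₂, hE₂⟩ := ext t s hts
    -- combine
    have C1 : dd (n₂ • t₁) (n₂ • s₁) = dd (n₂ • (a₁ + n₁ • s)) (n₂ • (b₁ + n₁ • t)) := by
      have := congrArg (gnsmul n₂) hE₁
      rwa [gnsmul_dd, gnsmul_dd] at this
    have C2 : dd (n₁ • t₂) (n₁ • s₂) = dd (n₁ • (a₂ + n₂ • t)) (n₁ • (b₂ + n₂ • s)) := by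
      have := congrArg (gnsmul n₁) hE₂
      rwa [gnsmul_dd, gnsmul_dd] at this
    have C3 : dd (n₂ • t₁ + n₁ • t₂) (n₂ • s₁ + n₁ • s₂)
        = dd (n₂ • (a₁ + n₁ • s) + n₁ • (a₂ + n₂ • t)) (n₂ • (b₁ + n₁ • t) + n₁ • (b₂ + n₂ • s)) := by
      have := congrArg₂ gplus C1 C2
      rwa [gplus_dd, gplus_dd] at this
    have C4 : dd (n₂ • (a₁ + n₁ • s) + n₁ • (a₂ + n₂ • t)) (n₂ • (b₁ + n₁ • t) + n₁ • (b₂ + n₂ • s))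
        = dd (n₂ • a₁ + n₁ • a₂) (n₂ • b₁ + n₁ • b₂) := by
      have e1 : n₂ • (a₁ + n₁ • s) + n₁ • (a₂ + n₂ • t)
          = (n₂ • a₁ + n₁ • a₂) + ((n₂ * n₁) • s + (n₂ * n₁) • t) := by
        rw [nsmul_add, nsmul_add, ← mul_nsmul, ← mul_nsmul, Nat.mul_comm n₁ n₂]
        abel
      have e2 : n₂ • (b₁ + n₁ • t) + n₁ • (b₂ + n₂ • s)
          = (n₂ • b₁ + n₁ • b₂) + ((n₂ * n₁) • s + (n₂ * n₁) • t) := by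
        rw [nsmul_add, nsmul_add, ← mul_nsmul, ← mul_nsmul, Nat.mul_comm n₁ n₂]
        abel
      rw [e1, e2, dd_add_cancel]
    have hqP : dd (n₂ • t₁ + n₁ • t₂) (n₂ • s₁ + n₁ • s₂) ∈ P := by
      rw [C3, C4]
      have h1 : gnsmul n₂ (dd a₁ b₁) ∈ P := cone_nsmul hP hp₁ n₂
      have h2 : gnsmul n₁ (dd a₂ b₂) ∈ P := cone_nsmul hP hp₂ n₁
      have := hP.2.2.1 _ _ h1 h2
      rwa [gnsmul_dd, gnsmul_dd, gplus_dd] at this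
    have hlt : n₂ • s₁ + n₁ • s₂ < n₂ • t₁ + n₁ • t₂ :=
      add_lt_add'' hmono hstrict (nsmul_lt_nsmul'' hmono hstrict hlt₁ n₂ hn₂)
        (nsmul_le_nsmul'' hmono hlt₂.le n₁)
    exact hP.2.2.2 _ _ hlt hqP
  · -- translation invariance
    intro r s t
    show dd s t ∈ P ↔ dd (r + s) (r + t) ∈ P
    rw [dd_trans_shift]
  · -- transitivity
    intro s t u h1 h2
    have := hP.2.2.1 _ _ h1 h2
    rwa [dd_chain] at this
  · -- Sig positivity
    intro ρ s hρ
    show dd s (ρ + s) ∈ P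
    have h2 : dd s (ρ + s) = dd 0 ρ := dd_eq_iff.2 ⟨0, by abel⟩
    rw [h2]
    exact hP.2.1 ρ hρ

end OrderExt

section Main

variable {k : Type*} [Field k] {S : Type*} [AddCommMonoid S] [PartialOrder S] [DecidableEq S]
variable {A : Type*} [Ring A] [Algebra k A] {B : Type*} [Ring B] [Algebra k B]

open scoped Classical

/-- All the data of the main theorem, with the order alreadyrefined to a total preorder `R`. -/
structure Ctx (k S A B : Type*) [Field k] [AddCommMonoid S] [PartialOrder S] [DecidableEq S]
    [Ring A] [Algebra k A] [Ring B] [Algebra k B] where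
  X : S → Submodule k A
  hinternal : DirectSum.IsInternal X
  hmulX : ∀ r s : S, ∀ a ∈ X r, ∀ b ∈ X s, a * b ∈ ⨆ (t : S) (_ : t ≤ r + s), X t
  pr : S → (A →ₗ[k] A)
  hpr_mem : ∀ (t : S) (a : A), pr t a ∈ X t
  hpr_id : ∀ t : S, ∀ x ∈ X t, pr t x = x
  hpr_ne : ∀ s t : S, s ≠ t → ∀ x ∈ X s, pr t x = 0
  e : A ≃ₗ[k] B
  he_mul : ∀ r s : S, ∀ x ∈ X r, ∀ y ∈ X s, e x * e y = e (pr (r + s) (x * y))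
  R : S → S → Prop
  Rle : ∀ s t : S, s ≤ t → R s t
  Rlt : ∀ s t : S, s < t → ¬ R t s
  Rtot : ∀ s t : S, R s t ∨ R t s
  Rtrans : ∀ s t u : S, R s t → R t u → R s u
  Rshift : ∀ r s t : S, R s t ↔ R (r + s) (r + t)
  Rpos : ∀ ρ s : S, (∃ y ∈ X ρ, y ≠ (0 : A)) → R s (ρ + s)

namespace Ctx

variable (C : Ctx k S A B)

lemma Rrefl (s : S) : C.R s s := C.Rle s s le_rfl

lemma pr_pr (t w : S) (a : A) : C.pr w (C.pr t a) = if w = t then C.pr t a else 0 := by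
  split
  · next h => subst h; exact C.hpr_id w _ (C.hpr_mem w a)
  · next h => exact C.hpr_ne t w (fun hh => h hh.symm) _ (C.hpr_mem t a)

lemma exists_T (a : A) : ∃ T : Finset S, (∀ t ∉ T, C.pr t a = 0) ∧ a = ∑ t ∈ T, C.pr t a := by
  obtain ⟨v, hv⟩ := C.hinternal.2 a
  classical
  refine ⟨v.support, ?_, ?_⟩
  · intro t ht
    have hsum : (∑ i ∈ v.support, ((v i : A))) = a := by
      rw [← hv]
      conv_rhs => rw [← DirectSum.sum_support_of v]
      rw [map_sum]
      refine Finset.sum_congr rfl fun i _ => ?_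
      simp [DirectSum.coeAddMonoidHom_of]
    have : C.pr t a = ∑ i ∈ v.support, C.pr t ((v i : A)) := by
      rw [← hsum, map_sum]
    rw [this]
    refine Finset.sum_eq_zero fun i hi => ?_
    have hne : (i : S) ≠ t := by rintro rfl; exact ht hi
    exact C.hpr_ne i t hne _ (v i).2
  · have hsum : (∑ i ∈ v.support, ((v i : A))) = a := by
      rw [← hv]
      conv_rhs => rw [← DirectSum.sum_support_of v]
      rw [map_sum]
      refine Finset.sum_congr rfl fun i _ => ?_
      simp [DirectSum.coeAddMonoidHom_of]
    rw [← hsum]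
    refine (Finset.sum_congr rfl fun t ht => ?_)
    -- goal: (v t : A) = C.pr t (∑ i in v.support, (v i : A))
    rw [map_sum]
    rw [Finset.sum_eq_single_of_mem t ht]
    · exact (C.hpr_id t _ (v t).2).symm
    · intro i _ hne
      exact C.hpr_ne i t hne _ (v i).2

noncomputable def suppA (a : A) : Finset S :=
  @Finset.filter _ (fun t => C.pr t a ≠ 0) (Classical.decPred _) (C.exists_T a).choose

lemma mem_suppA {a : A} {t : S} : t ∈ C.suppA a ↔ C.pr t a ≠ 0 := by
  unfold suppA
  rw [@Finset.mem_filter _ _ (Classical.decPred _)]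
  constructor
  · exact fun h => h.2
  · intro h
    refine ⟨?_, h⟩
    by_contra hnot
    exact h ((C.exists_T a).choose_spec.1 t hnot)

lemma suppA_subset (a : A) : C.suppA a ⊆ (C.exists_T a).choose := by
  intro t ht
  unfold suppA at ht
  exact (@Finset.mem_filter _ _ (Classical.decPred _) _ _ |>.1 ht).1

lemma sum_suppA (a : A) : ∑ t ∈ C.suppA a, C.pr t a = a := by
  have hsub := C.suppA_subset a
  have hvan : ∀ t ∈ (C.exists_T a).choose, t ∉ C.suppA a → C.pr t a = 0 := by
    intro t _ ht
    by_contra hne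
    exact ht (C.mem_suppA.2 hne)
  have h2 := Finset.sum_subset hsub hvan
  rw [h2]
  exact ((C.exists_T a).choose_spec.2).symm

lemma sum_superset {a : A} {T : Finset S} (h : C.suppA a ⊆ T) : ∑ t ∈ T, C.pr t a = a := by
  have hvan : ∀ t ∈ T, t ∉ C.suppA a → C.pr t a = 0 := by
    intro t _ ht
    by_contra hne
    exact ht (C.mem_suppA.2 hne)
  have := Finset.sum_subset h hvan
  rw [← this]
  exact C.sum_suppA a

lemma eq_of_pr {a b : A} (h : ∀ w : S, C.pr w a = C.pr w b) : a = b := by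
  calc a = ∑ t ∈ (C.suppA a ∪ C.suppA b), C.pr t a :=
        (C.sum_superset Finset.subset_union_left).symm
    _ = ∑ t ∈ (C.suppA a ∪ C.suppA b), C.pr t b :=
        Finset.sum_congr rfl fun t _ => h t
    _ = b := C.sum_superset Finset.subset_union_right

lemma suppA_zero : C.suppA (0 : A) = ∅ := by
  ext t
  simp [mem_suppA]

lemma ne_zero_of_mem_suppA {a : A} {t : S} (h : t ∈ C.suppA a) : a ≠ 0 := by
  rintro rfl
  rw [C.suppA_zero] at h
  exact absurd h (Finset.notMem_empty t)

lemma suppA_nonempty {a : A} (h : a ≠ 0) : (C.suppA a).Nonempty := by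
  by_contra hne
  rw [Finset.not_nonempty_iff_eq_empty] at hne
  apply h
  rw [← C.sum_suppA a, hne, Finset.sum_empty]

lemma pr_mul_bound {r t : S} {b y : A} (hb : b ∈ C.X r) (hy : y ∈ C.X t)
    {w : S} (hw : ¬ w ≤ r + t) : C.pr w (b * y) = 0 := by
  have hmem := C.hmulX r t b hb y hy
  have hle : (⨆ (u : S) (_ : u ≤ r + t), C.X u) ≤ LinearMap.ker (C.pr w) := by
    refine iSup_le fun u => iSup_le fun hu => fun x hx => ?_
    have hne : u ≠ w := by rintro rfl; exact hw hu
    exact LinearMap.mem_ker.2 (C.hpr_ne u w hne x hx)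
  exact LinearMap.mem_ker.1 (hle hmem)

lemma finset_exists_max (T : Finset S) (hT : T.Nonempty) :
    ∃ u ∈ T, ∀ t ∈ T, C.R t u := by
  classical
  induction T using Finset.induction with
  | empty => exact absurd hT (by simp)
  | insert a T0 hnotmem IH =>
    by_cases hT0 : T0.Nonempty
    · obtain ⟨u, hu, hmax⟩ := IH hT0
      rcases C.Rtot u a with h | h
      · refine ⟨a, Finset.mem_insert_self a T0, ?_⟩
        intro t ht
        rcases Finset.mem_insert.1 ht with rfl | ht0
        · exact C.Rrefl t
        · exact C.Rtrans _ _ _ (hmax t ht0) h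
      · refine ⟨u, Finset.mem_insert_of_mem hu, ?_⟩
        intro t ht
        rcases Finset.mem_insert.1 ht with rfl | ht0
        · exact h
        · exact hmax t ht0
    · rw [Finset.not_nonempty_iff_eq_empty] at hT0
      subst hT0
      refine ⟨a, Finset.mem_insert_self a ∅, ?_⟩
      intro t ht
      rcases Finset.mem_insert.1 ht with rfl | ht0
      · exact C.Rrefl t
      · exact absurd ht0 (Finset.notMem_empty t)

noncomputable def delta (a : A) : S :=
  if h : (C.suppA a).Nonempty then (C.finset_exists_max _ h).choose else 0

lemma delta_mem {a : A} (h : a ≠ 0) : C.delta a ∈ C.suppA a := by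
  unfold delta
  rw [dif_pos (C.suppA_nonempty h)]
  exact (C.finset_exists_max _ (C.suppA_nonempty h)).choose_spec.1

lemma delta_max {a : A} (h : a ≠ 0) : ∀ t ∈ C.suppA a, C.R t (C.delta a) := by
  unfold delta
  rw [dif_pos (C.suppA_nonempty h)]
  exact (C.finset_exists_max _ (C.suppA_nonempty h)).choose_spec.2

/-- the degrees of `a` in the `R`-class of `u` -/
noncomputable def topF (u : S) (a : A) : Finset S :=
  @Finset.filter _ (fun t => C.R t u ∧ C.R u t) (Classical.decPred _) (C.suppA a)

lemma mem_topF {u : S} {a : A} {t : S} :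
    t ∈ C.topF u a ↔ t ∈ C.suppA a ∧ C.R t u ∧ C.R u t := by
  unfold topF
  rw [@Finset.mem_filter _ _ (Classical.decPred _)]

/-- the slice of `a` at the `R`-class of `u` -/
noncomputable def Ltop (u : S) (a : A) : A := ∑ t ∈ C.topF u a, C.pr t a

/-- the top slice of `a` -/
noncomputable def topP (a : A) : A := C.Ltop (C.delta a) a

lemma pr_sum_piece (F : Finset S) (a : A) (w : S) :
    C.pr w (∑ t ∈ F, C.pr t a) = if w ∈ F then C.pr w a else 0 := by
  rw [map_sum]
  classical
  rw [Finset.sum_congr rfl (fun t _ => C.pr_pr t w a)]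
  split
  · next h =>
    rw [Finset.sum_ite_eq F w (fun t => C.pr t a), if_pos h]
  · next h =>
    refine Finset.sum_eq_zero fun t ht => ?_
    rw [if_neg]
    rintro rfl
    exact h ht

lemma pr_Ltop (u : S) (a : A) (w : S) :
    C.pr w (C.Ltop u a) = if C.R w u ∧ C.R u w then C.pr w a else 0 := by
  unfold Ltop
  rw [C.pr_sum_piece]
  by_cases hcl : C.R w u ∧ C.R u w
  · rw [if_pos hcl]
    by_cases hz : C.pr w a = 0
    · rw [hz]; split <;> rfl
    · rw [if_pos (C.mem_topF.2 ⟨C.mem_suppA.2 hz, hcl⟩)]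
  · rw [if_neg hcl, if_neg]
    intro hmem
    exact hcl (C.mem_topF.1 hmem).2

lemma Ltop_add (u : S) (a b : A) : C.Ltop u (a + b) = C.Ltop u a + C.Ltop u b := by
  refine C.eq_of_pr fun w => ?_
  rw [map_add, C.pr_Ltop, C.pr_Ltop, C.pr_Ltop, map_add]
  split
  · rfl
  · rw [add_zero]

lemma Ltop_smul (u : S) (c : k) (a : A) : C.Ltop u (c • a) = c • C.Ltop u a := by
  refine C.eq_of_pr fun w => ?_
  rw [map_smul, C.pr_Ltop, C.pr_Ltop, map_smul]
  split
  · rfl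
  · rw [smul_zero]

/-- `Ltop u` as a linear map. -/
noncomputable def LtopL (u : S) : A →ₗ[k] A where
  toFun := C.Ltop u
  map_add' := C.Ltop_add u
  map_smul' := C.Ltop_smul u

@[simp] lemma LtopL_apply (u : S) (a : A) : C.LtopL u a = C.Ltop u a := rfl

lemma Ltop_zero (u : S) : C.Ltop u (0 : A) = 0 := by
  refine C.eq_of_pr fun w => ?_
  rw [C.pr_Ltop, map_zero]
  split <;> rfl

lemma topP_zero : C.topP (0 : A) = 0 := C.Ltop_zero _

lemma Ltop_eq_self {u : S} {a : A} (h : ∀ t ∈ C.suppA a, C.R t u ∧ C.R u t) :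
    C.Ltop u a = a := by
  refine C.eq_of_pr fun w => ?_
  rw [C.pr_Ltop]
  split
  · rfl
  · next hcl =>
    by_contra hne
    exact hcl (h w (C.mem_suppA.2 fun h0 => hne h0.symm))

lemma pr_topP (a : A) (w : S) :
    C.pr w (C.topP a) = if C.R w (C.delta a) ∧ C.R (C.delta a) w then C.pr w a else 0 :=
  C.pr_Ltop _ a w

lemma topP_self_proj (a : A) : C.Ltop (C.delta a) (C.topP a) = C.topP a := by
  refine C.eq_of_pr fun w => ?_
  rw [C.pr_Ltop, C.pr_topP]
  split <;> rfl

lemma Ltop_topP_match {u : S} {c : A} (h : C.R u (C.delta c) ∧ C.R (C.delta c) u) :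
    C.Ltop u (C.topP c) = C.topP c := by
  refine C.eq_of_pr fun w => ?_
  rw [C.pr_Ltop, C.pr_topP]
  by_cases hw : C.R w u ∧ C.R u w
  · rw [if_pos hw]
  · rw [if_neg hw, if_neg]
    intro hcl
    exact hw ⟨C.Rtrans _ _ _ hcl.1 h.2, C.Rtrans _ _ _ h.1 hcl.2⟩

lemma Ltop_topP_nomatch {u : S} {c : A} (h : ¬ (C.R u (C.delta c) ∧ C.R (C.delta c) u)) :
    C.Ltop u (C.topP c) = 0 := by
  refine C.eq_of_pr fun w => ?_
  rw [C.pr_Ltop, map_zero, C.pr_topP]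
  by_cases hw : C.R w u ∧ C.R u w
  · rw [if_pos hw, if_neg]
    intro hcl
    exact h ⟨C.Rtrans _ _ _ hw.2 hcl.1, C.Rtrans _ _ _ hcl.2 hw.1⟩
  · rw [if_neg hw]

lemma pr_delta_topP {a : A} (h : a ≠ 0) : C.pr (C.delta a) (C.topP a) ≠ 0 := by
  rw [C.pr_topP, if_pos ⟨C.Rrefl _, C.Rrefl _⟩]
  exact C.mem_suppA.1 (C.delta_mem h)

lemma topP_ne_zero {a : A} (h : a ≠ 0) : C.topP a ≠ 0 := by
  intro h0
  apply C.pr_delta_topP h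
  rw [h0, map_zero]

lemma mul_sum_supp (b c : A) : b * c = ∑ t ∈ C.suppA c, b * C.pr t c := by
  conv_lhs => rw [← C.sum_suppA c]
  rw [Finset.mul_sum]

lemma pr_mul_expand (b c : A) (w : S) :
    C.pr w (b * c) = ∑ t ∈ C.suppA c, C.pr w (b * C.pr t c) := by
  rw [C.mul_sum_supp b c, map_sum]

lemma supp_mul_bound {r : S} {b : A} (hb : b ∈ C.X r) (c : A) :
    ∀ w ∈ C.suppA (b * c), C.R w (r + C.delta c) := by
  intro w hw
  have hne := C.mem_suppA.1 hw
  rw [C.pr_mul_expand] at hne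
  obtain ⟨t, ht, hterm⟩ := Finset.exists_ne_zero_of_sum_ne_zero hne
  have hc0 : c ≠ 0 := C.ne_zero_of_mem_suppA ht
  have hle : w ≤ r + t := by
    by_contra hnot
    exact hterm (C.pr_mul_bound hb (C.hpr_mem t c) hnot)
  exact C.Rtrans _ _ _ (C.Rle _ _ hle)
    ((C.Rshift r t (C.delta c)).1 (C.delta_max hc0 t ht))

lemma key_prod {r : S} {b : A} (hb : b ∈ C.X r) (c : A) :
    ∑ t ∈ C.topF (C.delta c) c, C.pr (r + t) (b * C.pr t c)
      = C.Ltop (r + C.delta c) (b * c) := by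
  refine C.eq_of_pr fun w => ?_
  rw [map_sum, C.pr_Ltop]
  have hLHS : ∀ t ∈ C.topF (C.delta c) c,
      C.pr w (C.pr (r + t) (b * C.pr t c))
        = if w = r + t then C.pr w (b * C.pr t c) else 0 := by
    intro t _
    rw [C.pr_pr]
    split
    · next h => rw [h]
    · rfl
  rw [Finset.sum_congr rfl hLHS]
  by_cases hcl : C.R w (r + C.delta c) ∧ C.R (r + C.delta c) w
  · rw [if_pos hcl, C.pr_mul_expand]
    have hsub : C.topF (C.delta c) c ⊆ C.suppA c := fun t ht => (C.mem_topF.1 ht).1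
    have hvan : ∀ t ∈ C.suppA c, t ∉ C.topF (C.delta c) c → C.pr w (b * C.pr t c) = 0 := by
      intro t ht htop
      have hc0 : c ≠ 0 := C.ne_zero_of_mem_suppA ht
      have hRt : C.R t (C.delta c) := C.delta_max hc0 t ht
      have hnRd : ¬ C.R (C.delta c) t := by
        intro hcon
        exact htop (C.mem_topF.2 ⟨ht, hRt, hcon⟩)
      by_contra hne
      have hle : w ≤ r + t := by
        by_contra hnot
        exact hne (C.pr_mul_bound hb (C.hpr_mem t c) hnot)
      have : C.R (r + C.delta c) (r + t) := C.Rtrans _ _ _ hcl.2 (C.Rle _ _ hle)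
      exact hnRd ((C.Rshift r (C.delta c) t).2 this)
    rw [← Finset.sum_subset hsub hvan]
    refine Finset.sum_congr rfl fun t ht => ?_
    by_cases hwt : w = r + t
    · rw [if_pos hwt]
    · rw [if_neg hwt]
      by_contra hne
      have hle : w ≤ r + t := by
        by_contra hnot
        exact hne (C.pr_mul_bound hb (C.hpr_mem t c) hnot).symm
      have hlt : w < r + t := lt_of_le_of_ne hle hwt
      have h1 : C.R (r + t) (r + C.delta c) := (C.Rshift r t (C.delta c)).1 (C.mem_topF.1 ht).2.1
      have h2 : C.R (r + t) w := C.Rtrans _ _ _ h1 hcl.2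
      exact C.Rlt _ _ hlt h2
  · rw [if_neg hcl]
    refine Finset.sum_eq_zero fun t ht => ?_
    rw [if_neg]
    rintro rfl
    obtain ⟨-, hR1, hR2⟩ := C.mem_topF.1 ht
    exact hcl ⟨(C.Rshift r t (C.delta c)).1 hR1, (C.Rshift r (C.delta c) t).1 hR2⟩

lemma e_mul_top {r : S} {b : A} (hb : b ∈ C.X r) (c : A) :
    C.e b * C.e (C.topP c) = C.e (C.Ltop (r + C.delta c) (b * c)) := by
  have h1 : C.e (C.topP c) = ∑ t ∈ C.topF (C.delta c) c, C.e (C.pr t c) := by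
    unfold topP Ltop
    rw [map_sum]
  rw [h1, Finset.mul_sum]
  have h2 : ∀ t ∈ C.topF (C.delta c) c,
      C.e b * C.e (C.pr t c) = C.e (C.pr (r + t) (b * C.pr t c)) := by
    intro t _
    exact C.he_mul r t b hb _ (C.hpr_mem t c)
  rw [Finset.sum_congr rfl h2, ← map_sum, C.key_prod hb c]

lemma Ltop_mul_cases {r : S} {b : A} (hb : b ∈ C.X r) (c : A) :
    C.Ltop (r + C.delta c) (b * c) = 0 ∨ C.Ltop (r + C.delta c) (b * c) = C.topP (b * c) := by
  by_cases hz : b * c = 0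
  · left; rw [hz, C.Ltop_zero]
  by_cases hmatch : C.R (r + C.delta c) (C.delta (b * c))
  · right
    have hdmem := C.delta_mem hz
    have hback : C.R (C.delta (b * c)) (r + C.delta c) := C.supp_mul_bound hb c _ hdmem
    refine C.eq_of_pr fun w => ?_
    rw [C.pr_Ltop, C.pr_topP]
    by_cases hw : C.R w (r + C.delta c) ∧ C.R (r + C.delta c) w
    · rw [if_pos hw, if_pos ⟨C.Rtrans _ _ _ hw.1 hmatch, C.Rtrans _ _ _ hback hw.2⟩]
    · rw [if_neg hw, if_neg]
      intro hcl
      exact hw ⟨C.Rtrans _ _ _ hcl.1 hback, C.Rtrans _ _ _ hmatch hcl.2⟩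
  · left
    refine C.eq_of_pr fun w => ?_
    rw [C.pr_Ltop, map_zero]
    split
    · next hw =>
      by_contra hne
      have hwsupp : w ∈ C.suppA (b * c) := C.mem_suppA.2 hne
      have : C.R w (C.delta (b * c)) := C.delta_max hz w hwsupp
      exact hmatch (C.Rtrans _ _ _ hw.2 this)
    · rfl

/-- span of top slices of elements of `I` -/
noncomputable def NA (I : Submodule A A) : Submodule k A :=
  Submodule.span k {x : A | ∃ c ∈ I, x = C.topP c}

lemma topP_mem_NA {I : Submodule A A} {c : A} (hc : c ∈ I) : C.topP c ∈ C.NA I :=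
  Submodule.subset_span ⟨c, hc, rfl⟩

lemma NA_mono {I I' : Submodule A A} (h : I ≤ I') : C.NA I ≤ C.NA I' :=
  Submodule.span_mono (fun x ⟨c, hc, hx⟩ => ⟨c, h hc, hx⟩)

lemma homog_mul_NA {I : Submodule A A} {r : S} {b : A} (hb : b ∈ C.X r)
    {n : A} (hn : n ∈ C.NA I) : ∃ m ∈ C.NA I, C.e b * C.e n = C.e m := by
  induction hn using Submodule.span_induction with
  | mem x hx =>
    obtain ⟨c, hc, rfl⟩ := hx
    rw [C.e_mul_top hb c]
    rcases C.Ltop_mul_cases hb c with h0 | htop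
    · exact ⟨0, zero_mem _, by rw [h0]⟩
    · refine ⟨C.topP (b * c), ?_, by rw [htop]⟩
      refine C.topP_mem_NA ?_
      have := I.smul_mem b hc
      rwa [smul_eq_mul] at this
  | zero =>
    exact ⟨0, zero_mem _, by rw [map_zero, mul_zero]⟩
  | add x y _ _ IHx IHy =>
    obtain ⟨mx, hmx, hex⟩ := IHx
    obtain ⟨my, hmy, hey⟩ := IHy
    exact ⟨mx + my, add_mem hmx hmy, by rw [map_add, mul_add, hex, hey, map_add]⟩
  | smul c x _ IH =>
    obtain ⟨m, hm, hem⟩ := IH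
    exact ⟨c • m, Submodule.smul_mem _ c hm,
      by rw [map_smul, mul_smul_comm, hem, map_smul]⟩

lemma mul_NA {I : Submodule A A} (β : B) {n : A} (hn : n ∈ C.NA I) :
    ∃ m ∈ C.NA I, β * C.e n = C.e m := by
  have hβ : β = ∑ ρ ∈ C.suppA (C.e.symm β), C.e (C.pr ρ (C.e.symm β)) := by
    rw [← map_sum, C.sum_suppA, LinearEquiv.apply_symm_apply]
  rw [hβ, Finset.sum_mul]
  have : ∀ T : Finset S, ∃ m ∈ C.NA I,
      (∑ ρ ∈ T, C.e (C.pr ρ (C.e.symm β)) * C.e n) = C.e m := by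
    intro T
    induction T using Finset.induction with
    | empty => exact ⟨0, zero_mem _, by rw [Finset.sum_empty, map_zero]⟩
    | insert ρ T hρ IH =>
      obtain ⟨m1, hm1, he1⟩ := IH
      obtain ⟨m2, hm2, he2⟩ := C.homog_mul_NA (C.hpr_mem _ (C.e.symm β)) hn
      refine ⟨m2 + m1, add_mem hm2 hm1, ?_⟩
      rw [Finset.sum_insert hρ, he1, he2, map_add]
  obtain ⟨m, hm, he⟩ := this (C.suppA (C.e.symm β))
  exact ⟨m, hm, he⟩

/-- the corresponding left ideal of `B` -/
noncomputable def JB (I : Submodule A A) : Submodule B B where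
  carrier := {y : B | ∃ m ∈ C.NA I, y = C.e m}
  zero_mem' := ⟨0, zero_mem _, (map_zero _).symm⟩
  add_mem' := by
    rintro y z ⟨m, hm, rfl⟩ ⟨m', hm', rfl⟩
    exact ⟨m + m', add_mem hm hm', (map_add _ _ _).symm⟩
  smul_mem' := by
    rintro β y ⟨m, hm, rfl⟩
    rw [smul_eq_mul]
    obtain ⟨m', hm', he⟩ := C.mul_NA β hm
    exact ⟨m', hm', he⟩

lemma JB_mono {I I' : Submodule A A} (h : I ≤ I') : C.JB I ≤ C.JB I' := by
  rintro y ⟨m, hm, rfl⟩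
  exact ⟨m, C.NA_mono h hm, rfl⟩

lemma NA_eq_of_JB_eq {I I' : Submodule A A} (h : C.JB I = C.JB I') : C.NA I = C.NA I' := by
  ext m
  constructor
  · intro hm
    have : C.e m ∈ C.JB I' := h ▸ (⟨m, hm, rfl⟩ : C.e m ∈ C.JB I)
    obtain ⟨m', hm', he⟩ := this
    rwa [C.e.injective he]
  · intro hm
    have : C.e m ∈ C.JB I := h ▸ (⟨m, hm, rfl⟩ : C.e m ∈ C.JB I')
    obtain ⟨m', hm', he⟩ := this
    rwa [C.e.injective he]

lemma descent_step {I I' : Submodule A A} (hII : I ≤ I') (hNA : C.NA I' ≤ C.NA I)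
    {a : A} (ha : a ∈ I') (hnot : a ∉ I) :
    ∃ a' : A, a' ∈ I' ∧ a' ∉ I ∧ C.R (C.delta a') (C.delta a) ∧
      ¬ C.R (C.delta a) (C.delta a') := by
  have htop : C.topP a ∈ C.NA I := hNA (C.topP_mem_NA ha)
  obtain ⟨n, f, g, hsum⟩ := Submodule.mem_span_set'.1 htop
  have hgen : ∀ i : Fin n, ∃ c ∈ I, (g i : A) = C.topP c := fun i => (g i).2
  choose cf hcI hgc using hgen
  set u := C.delta a with hu
  set M : Finset (Fin n) :=
    Finset.univ.filter (fun i => C.R u (C.delta (cf i)) ∧ C.R (C.delta (cf i)) u) with hM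
  have hEq : C.topP a = ∑ i ∈ M, f i • C.topP (cf i) := by
    have happ := congrArg (C.LtopL u) hsum
    rw [map_sum] at happ
    rw [C.LtopL_apply, C.topP_self_proj] at happ
    rw [← happ]
    rw [hM, Finset.sum_filter]
    refine Finset.sum_congr rfl fun i _ => ?_
    rw [map_smul, C.LtopL_apply, hgc i]
    by_cases hm : C.R u (C.delta (cf i)) ∧ C.R (C.delta (cf i)) u
    · rw [if_pos hm, C.Ltop_topP_match hm]
    · rw [if_neg hm, C.Ltop_topP_nomatch hm, smul_zero]
  set cs : A := ∑ i ∈ M, f i • cf i with hcs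
  have hcsI : cs ∈ I := by
    refine Submodule.sum_mem _ fun i _ => ?_
    have h1 : (algebraMap k A (f i)) • cf i ∈ I := I.smul_mem _ (hcI i)
    rwa [algebraMap_smul] at h1
  refine ⟨a - cs, sub_mem ha (hII hcsI), ?_, ?_, ?_⟩
  · intro hmem
    apply hnot
    have : a = (a - cs) + cs := by abel
    rw [this]
    exact add_mem hmem hcsI
  all_goals {
    have hkill : ∀ t : S, C.R u t → C.pr t (a - cs) = 0 := by
      intro t hut
      rw [map_sub, hcs, map_sum]
      by_cases htu : C.R t u
      · have hta : C.pr t a = C.pr t (C.topP a) := by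
          rw [C.pr_topP, if_pos ⟨htu, hut⟩]
        have : C.pr t (C.topP a) = ∑ i ∈ M, f i • C.pr t (cf i) := by
          rw [hEq, map_sum]
          refine Finset.sum_congr rfl fun i hi => ?_
          rw [map_smul, C.pr_topP, if_pos]
          have hmi := (Finset.mem_filter.1 hi).2
          exact ⟨C.Rtrans _ _ _ htu hmi.1, C.Rtrans _ _ _ hmi.2 hut⟩
        rw [hta, this]
        rw [sub_eq_zero]
        refine Finset.sum_congr rfl fun i _ => ?_
        rw [map_smul]
      · have h1 : C.pr t a = 0 := by
          by_contra hne
          have : t ∈ C.suppA a := C.mem_suppA.2 hne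
          have ha0 : a ≠ 0 := C.ne_zero_of_mem_suppA this
          exact htu (C.delta_max ha0 t this)
        have h2 : ∀ i ∈ M, C.pr t (f i • cf i) = 0 := by
          intro i hi
          have hmi := (Finset.mem_filter.1 hi).2
          rw [map_smul]
          have : C.pr t (cf i) = 0 := by
            by_contra hne
            have hts : t ∈ C.suppA (cf i) := C.mem_suppA.2 hne
            have hc0 : cf i ≠ 0 := C.ne_zero_of_mem_suppA hts
            exact htu (C.Rtrans _ _ _ (C.delta_max hc0 t hts) hmi.2)
          rw [this, smul_zero]
        rw [h1, Finset.sum_congr rfl h2, Finset.sum_const_zero, sub_zero]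
    have ha'0 : a - cs ≠ 0 := by
      intro h0
      apply hnot
      have : a = cs := by
        have := sub_eq_zero.1 h0
        exact this
      rw [this]; exact hcsI
    have hd := C.delta_mem ha'0
    have hdne := C.mem_suppA.1 hd
    have hnR : ¬ C.R u (C.delta (a - cs)) := fun hcon => hdne (hkill _ hcon)
    first
    | exact (C.Rtot (C.delta (a - cs)) u).resolve_right hnR
    | exact hnR
  }

lemma symm_mul_e {v : S} {x : A} (hx : x ∈ C.X v) (β : B) :
    C.e.symm (β * C.e x)
      = ∑ ρ ∈ C.suppA (C.e.symm β), C.pr (ρ + v) (C.pr ρ (C.e.symm β) * x) := by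
  have hβ : β = ∑ ρ ∈ C.suppA (C.e.symm β), C.e (C.pr ρ (C.e.symm β)) := by
    rw [← map_sum, C.sum_suppA, LinearEquiv.apply_symm_apply]
  conv_lhs => rw [hβ]
  rw [Finset.sum_mul]
  have h2 : ∀ ρ ∈ C.suppA (C.e.symm β),
      C.e (C.pr ρ (C.e.symm β)) * C.e x = C.e (C.pr (ρ + v) (C.pr ρ (C.e.symm β) * x)) := by
    intro ρ _
    exact C.he_mul ρ v _ (C.hpr_mem ρ _) x hx
  rw [Finset.sum_congr rfl h2, ← map_sum, LinearEquiv.symm_apply_apply]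

lemma no_desc (hB : IsNoetherian B B) (u : ℕ → S)
    (hXu : ∀ i, ∃ y ∈ C.X (u i), y ≠ (0 : A))
    (hdesc : ∀ i, C.R (u (i + 1)) (u i) ∧ ¬ C.R (u i) (u (i + 1))) : False := by
  have hstr : ∀ i j, i < j → ¬ C.R (u i) (u j) := by
    intro i j hij
    induction j with
    | zero => exact absurd hij (Nat.not_lt_zero i)
    | succ j IH =>
      rcases Nat.lt_succ_iff_lt_or_eq.1 hij with h | h
      · intro hcon
        exact IH h (C.Rtrans _ _ _ hcon (hdesc j).1)
      · subst h
        exact (hdesc i).2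
  set cc : ℕ →o Submodule B B :=
    ⟨fun n => Submodule.span B (⋃ i ∈ Finset.range (n + 1), (C.e '' (C.X (u i) : Set A))),
      by
        intro m n hmn
        refine Submodule.span_mono (Set.iUnion_mono fun i => ?_)
        refine Set.iUnion_mono' fun hi => ?_
        exact ⟨by
          simp only [Finset.mem_range] at hi ⊢
          omega, le_rfl⟩⟩ with hcc
  obtain ⟨N, hN⟩ := monotone_stabilizes_iff_noetherian.mpr hB cc
  obtain ⟨y, hyX, hy0⟩ := hXu (N + 1)
  have hy_mem : C.e y ∈ cc N := by
    rw [hN (N + 1) (Nat.le_succ N)]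
    refine Submodule.subset_span ?_
    refine Set.mem_iUnion.2 ⟨N + 1, ?_⟩
    refine Set.mem_iUnion.2 ⟨by simp, ⟨y, hyX, rfl⟩⟩
  obtain ⟨n, f, g, hsum⟩ := Submodule.mem_span_set'.1 hy_mem
  have hgen : ∀ j : Fin n, ∃ i : ℕ, i ≤ N ∧ ∃ x ∈ C.X (u i), (g j : B) = C.e x := by
    intro j
    have := (g j).2
    simp only [Set.mem_iUnion] at this
    obtain ⟨i, hi, x, hx, hgx⟩ := this
    simp only [Finset.mem_range] at hi
    exact ⟨i, by omega, x, hx, hgx.symm⟩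
  choose idx hidx xf hxf hgx using hgen
  have hy_eq : y = ∑ j : Fin n, C.e.symm (f j • (g j : B)) := by
    have := congrArg C.e.symm hsum
    rw [map_sum, LinearEquiv.symm_apply_apply] at this
    exact this.symm
  have hy_eq2 : y = ∑ j : Fin n, ∑ ρ ∈ C.suppA (C.e.symm (f j)),
      C.pr (ρ + u (idx j)) (C.pr ρ (C.e.symm (f j)) * xf j) := by
    rw [hy_eq]
    refine Finset.sum_congr rfl fun j _ => ?_
    rw [smul_eq_mul, hgx j]
    exact C.symm_mul_e (hxf j) (f j)
  have hy_proj : y = C.pr (u (N + 1)) y := (C.hpr_id _ y hyX).symm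
  have hy_eq3 : y = ∑ j : Fin n, ∑ ρ ∈ C.suppA (C.e.symm (f j)),
      (if u (N + 1) = ρ + u (idx j)
        then C.pr (ρ + u (idx j)) (C.pr ρ (C.e.symm (f j)) * xf j) else 0) := by
    conv_lhs => rw [hy_proj, hy_eq2]
    rw [map_sum]
    refine Finset.sum_congr rfl fun j _ => ?_
    rw [map_sum]
    refine Finset.sum_congr rfl fun ρ _ => ?_
    exact C.pr_pr _ _ _
  have hne : (∑ j : Fin n, ∑ ρ ∈ C.suppA (C.e.symm (f j)),
      (if u (N + 1) = ρ + u (idx j)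
        then C.pr (ρ + u (idx j)) (C.pr ρ (C.e.symm (f j)) * xf j) else 0)) ≠ 0 := by
    rw [← hy_eq3]; exact hy0
  obtain ⟨j, -, hj⟩ := Finset.exists_ne_zero_of_sum_ne_zero hne
  obtain ⟨ρ, hρmem, hρ⟩ := Finset.exists_ne_zero_of_sum_ne_zero hj
  have hcond : u (N + 1) = ρ + u (idx j) := by
    by_contra hc
    rw [if_neg hc] at hρ
    exact hρ rfl
  have hpr_ne_zero : C.pr ρ (C.e.symm (f j)) ≠ 0 := C.mem_suppA.1 hρmem
  have hpos : C.R (u (idx j)) (ρ + u (idx j)) :=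
    C.Rpos ρ (u (idx j)) ⟨C.pr ρ (C.e.symm (f j)), C.hpr_mem _ _, hpr_ne_zero⟩
  rw [← hcond] at hpos
  exact hstr (idx j) (N + 1) (Nat.lt_succ_of_le (hidx j)) hpos

lemma descent (hB : IsNoetherian B B) {I I' : Submodule A A} (hII : I ≤ I')
    (hNA : C.NA I' ≤ C.NA I) : I' ≤ I := by
  by_contra hle
  obtain ⟨a, haI', haI⟩ := SetLike.not_le_iff_exists.1 hle
  have step : ∀ p : {x : A // x ∈ I' ∧ x ∉ I}, ∃ q : {x : A // x ∈ I' ∧ x ∉ I},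
      C.R (C.delta (q : A)) (C.delta (p : A)) ∧ ¬ C.R (C.delta (p : A)) (C.delta (q : A)) := by
    rintro ⟨p, hp1, hp2⟩
    obtain ⟨a', ha'1, ha'2, ha'3, ha'4⟩ := C.descent_step hII hNA hp1 hp2
    exact ⟨⟨a', ha'1, ha'2⟩, ha'3, ha'4⟩
  choose F hF1 hF2 using step
  set seq : ℕ → {x : A // x ∈ I' ∧ x ∉ I} := fun n => F^[n] ⟨a, haI', haI⟩ with hseq
  have hsucc : ∀ n, seq (n + 1) = F (seq n) := by
    intro n
    rw [hseq]
    exact Function.iterate_succ_apply' F n _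
  refine C.no_desc hB (fun n => C.delta ((seq n : A))) (fun i => ?_) (fun i => ?_)
  · have hne : (seq i : A) ≠ 0 := by
      intro h0
      exact (seq i).2.2 (h0 ▸ zero_mem I)
    exact ⟨C.pr (C.delta ((seq i : A))) (seq i : A), C.hpr_mem _ _,
      C.mem_suppA.1 (C.delta_mem hne)⟩
  · have h1 := hF1 (seq i)
    have h2 := hF2 (seq i)
    rw [← hsucc i] at h1 h2
    exact ⟨h1, h2⟩

include C in
theorem main (hB : IsNoetherian B B) : IsNoetherian A A := by
  refine monotone_stabilizes_iff_noetherian.mp ?_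
  intro f
  obtain ⟨n, hn⟩ := monotone_stabilizes_iff_noetherian.mpr hB
    ⟨fun m => C.JB (f m), fun i j hij => C.JB_mono (f.mono hij)⟩
  refine ⟨n, fun m hm => ?_⟩
  induction m, hm using Nat.le_induction with
  | base => rfl
  | succ m hm IH =>
    rw [IH]
    have hJ : C.JB (f m) = C.JB (f (m + 1)) := by
      have h1 := hn m hm
      have h2 := hn (m + 1) (le_trans hm (Nat.le_succ m))
      exact h1.symm.trans h2
    have hNAeq := C.NA_eq_of_JB_eq hJ
    exact le_antisymm (f.mono (Nat.le_succ m)) (C.descent hB (f.mono (Nat.le_succ m)) hNAeq.ge)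

end Ctx

end Main

end GrProof



/-- Let `k` be a field, `(S,+,0)` an ordered commutative monoid whose order is
compatible with addition (both for `≤` and `<`), directed, and well-founded.  Let `A` be a
`k`-algebra with an internal direct sum decomposition `A = ⊕_{s ∈ S} X s` such that `1 ∈ X 0` and
`X r · X s ⊆ ⊕_{t ≤ r+s} X t`, with projections `π t` onto the components.  Let `B` be the
associated graded algebra: a `k`-algebra together with a `k`-linear equivalence `e : A ≃ B`
satisfying `e 1 = 1` and `e x * e y = e (π (r+s) (x*y))` for `x ∈ X r`, `y ∈ X s`.
If `B` is Noetherian, then `A` is Noetherian. -/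
theorem gr_noetherian_implies_noetherian
    {k : Type*} [Field k]
    {S : Type*} [AddCommMonoid S] [PartialOrder S] [DecidableEq S]
    (hmono : ∀ r r' s s' : S, r ≤ r' → s ≤ s' → r + s ≤ r' + s')
    (hstrict : ∀ r s t : S, r < s → r + t < s + t)
    (hdir : ∀ r s : S, ∃ m : S, r ≤ m ∧ s ≤ m)
    (hwf : WellFounded ((· < ·) : S → S → Prop))
    {A : Type*} [Ring A] [Algebra k A]
    (X : S → Submodule k A)
    (hinternal : DirectSum.IsInternal X)
    (hone : (1 : A) ∈ X 0)
    (hmulX : ∀ r s : S, ∀ a ∈ X r, ∀ b ∈ X s,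
      a * b ∈ ⨆ (t : S) (_ : t ≤ r + s), X t)
    (π : S → (A →ₗ[k] A))
    (hπ_mem : ∀ (t : S) (a : A), π t a ∈ X t)
    (hπ_id : ∀ t : S, ∀ x ∈ X t, π t x = x)
    (hπ_ne : ∀ s t : S, s ≠ t → ∀ x ∈ X s, π t x = 0)
    {B : Type*} [Ring B] [Algebra k B]
    (e : A ≃ₗ[k] B)
    (he_one : e 1 = 1)
    (he_mul : ∀ r s : S, ∀ x ∈ X r, ∀ y ∈ X s,
      e x * e y = e (π (r + s) (x * y)))
    (hB : IsNoetherianRing B) :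
    IsNoetherianRing A := by

  obtain ⟨R, hRle, hRlt, hRtot, hRshift, hRtrans, hRpos⟩ :=
    GrProof.exists_totalpre hmono hstrict hwf {ρ : S | ∃ y ∈ X ρ, y ≠ (0 : A)}
  let C : GrProof.Ctx k S A B :=
    { X := X, hinternal := hinternal, hmulX := hmulX, pr := π,
      hpr_mem := hπ_mem, hpr_id := hπ_id, hpr_ne := hπ_ne, e := e, he_mul := he_mul,
      R := R, Rle := hRle, Rlt := hRlt, Rtot := hRtot, Rtrans := hRtrans,
      Rshift := hRshift, Rpos := hRpos }
  exact isNoetherianRing_iff.mpr (C.main (isNoetherianRing_iff.mp hB))
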